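/- In any n-player resource allocation model in which every cost function C^r is submodular (C^r(X ∪ {i}) − C^r(X) ≥ C^r(Y ∪ {i}) − C^r(Y) for all X ⊆ Y ⊆ N and i ∈ N \ Y), nonnegative, and satisfies C^r(∅) = 0, every strategy vector Q satisfies C(Q) ≤ Φ(Q), where Φ(Q) = Σ_{r ∈ R} Σ_{∅ ≠ T ⊆ Q^r} ((|Q^r| − |T|)! (|T| − 1)! / |Q^r|!) · C^r(T) is the Shapley potential and C(Q) = Σ_{r ∈ R} C^r(Q^r) is the social cost. -/

import Mathlib

open Finset

def preSet {N : Type*} [DecidableEq N] (S : Finset N)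
    (π : {x // x ∈ S} ≃ Fin S.card) (i : {x // x ∈ S}) : Finset N :=
  (S.attach.filter (fun j => π j < π i)).image Subtype.val

noncomputable def shapley {N : Type*} [DecidableEq N]
    (C : Finset N → ℝ) (S : Finset N) (i : N) : ℝ :=
  if hi : i ∈ S then
    (1 / (Nat.factorial S.card : ℝ)) *
      ∑ π : {x // x ∈ S} ≃ Fin S.card,
        (C (preSet S π ⟨i, hi⟩ ∪ {i}) - C (preSet S π ⟨i, hi⟩))
  else 0

/-- `users P r = P^r = {i : r ∈ P_i}`, the set of players using resource `r`. -/
def users {n : ℕ} {R : Type*} [DecidableEq R]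
    (P : Fin n → Finset R) (r : R) : Finset (Fin n) :=
  Finset.univ.filter (fun i => r ∈ P i)

/-- The private cost of player `i` under Shapley cost sharing:
`C_i(P) = Σ_{r ∈ P_i} φ_i(C^r, P^r)`. -/
noncomputable def privCost {n : ℕ} {R : Type*} [DecidableEq R]
    (Cr : R → Finset (Fin n) → ℝ) (P : Fin n → Finset R) (i : Fin n) : ℝ :=
  ∑ r ∈ P i, shapley (Cr r) (users P r) i

/-- The social cost `C(P) = Σ_{r ∈ R} C^r(P^r)`. -/
noncomputable def socCost {n : ℕ} {R : Type*} [Fintype R] [DecidableEq R]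
    (Cr : R → Finset (Fin n) → ℝ) (P : Fin n → Finset R) : ℝ :=
  ∑ r : R, Cr r (users P r)

/-- The Shapley potential
`Φ(P) = Σ_{r ∈ R} Σ_{∅ ≠ T ⊆ P^r} ((|P^r|-|T|)!(|T|-1)!/|P^r|!) · C^r(T)`. -/
noncomputable def pot {n : ℕ} {R : Type*} [Fintype R] [DecidableEq R]
    (Cr : R → Finset (Fin n) → ℝ) (P : Fin n → Finset R) : ℝ :=
  ∑ r : R, ∑ T ∈ (users P r).powerset.filter (fun T => T.Nonempty),
    ((Nat.factorial ((users P r).card - T.card) : ℝ) *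
        (Nat.factorial (T.card - 1) : ℝ) / (Nat.factorial (users P r).card : ℝ)) *
      Cr r T

/-- `P` is a pure Nash equilibrium of the Shapley cost sharing game. -/
def isPNE {n : ℕ} {R : Type*} [DecidableEq R]
    (Strat : Fin n → Set (Finset R)) (Cr : R → Finset (Fin n) → ℝ)
    (P : Fin n → Finset R) : Prop :=
  (∀ i, P i ∈ Strat i) ∧
    ∀ i, ∀ Q ∈ Strat i, privCost Cr P i ≤ privCost Cr (Function.update P i Q) i

/-- `H_k`, the `k`-th harmonicNum number. -/
noncomputable def harmonicNum (k : ℕ) : ℝ := ∑ l ∈ Finset.Icc 1 k, (1 / (l : ℝ))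


noncomputable def wgt (s t : ℕ) : ℝ :=
  (Nat.factorial (s - t) : ℝ) * (Nat.factorial (t - 1) : ℝ) / (Nat.factorial s : ℝ)

lemma wgt_nonneg (s t : ℕ) : 0 ≤ wgt s t := by unfold wgt; positivity

lemma wgt_step {s u : ℕ} (h1 : 1 ≤ u) (h2 : u < s) :
    (u : ℝ) * wgt s u = ((s - u : ℕ) : ℝ) * wgt s (u + 1) := by
  have hsu : 0 < s - u := Nat.sub_pos_of_lt h2
  have hnat : u * ((s - u).factorial * (u - 1).factorial)
      = (s - u) * ((s - (u + 1)).factorial * u.factorial) := by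
    have e1 : u * (u - 1).factorial = u.factorial := Nat.mul_factorial_pred (by omega)
    have e2 : (s - u) * (s - (u + 1)).factorial = (s - u).factorial := by
      have h : s - (u + 1) = (s - u) - 1 := by omega
      rw [h]
      exact Nat.mul_factorial_pred (by omega)
    calc u * ((s - u).factorial * (u - 1).factorial)
        = (s - u).factorial * (u * (u - 1).factorial) := by ring
      _ = (s - u).factorial * u.factorial := by rw [e1]
      _ = ((s - u) * (s - (u + 1)).factorial) * u.factorial := by rw [e2]
      _ = (s - u) * ((s - (u + 1)).factorial * u.factorial) := by ring
  rw [wgt, wgt, mul_div_assoc', mul_div_assoc']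
  congr 1
  exact_mod_cast hnat

lemma wgt_self {s : ℕ} (hs : 1 ≤ s) : (s : ℝ) * wgt s s = 1 := by
  have h : s * (s - 1).factorial = s.factorial := Nat.mul_factorial_pred (by omega)
  rw [wgt]
  rw [Nat.sub_self, Nat.factorial_zero, Nat.cast_one, one_mul, mul_div_assoc']
  rw [div_eq_one_iff_eq (by exact_mod_cast s.factorial_ne_zero)]
  exact_mod_cast h

lemma marg_le {ι : Type*} [DecidableEq ι] (C : Finset ι → ℝ) (hC0 : C ∅ = 0)
    (hsub : ∀ (X Y : Finset ι) (i : ι), X ⊆ Y → i ∉ Y →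
      C (insert i Y) - C Y ≤ C (insert i X) - C X) :
    ∀ T : Finset ι, ∑ i ∈ T, (C T - C (T.erase i)) ≤ C T := by
  intro T
  induction T using Finset.induction_on with
  | empty => simp [hC0]
  | @insert j T' hj ih =>
    rw [Finset.sum_insert hj, Finset.erase_insert hj]
    have step : ∀ i ∈ T', C (insert j T') - C ((insert j T').erase i)
        ≤ C T' - C (T'.erase i) := by
      intro i hi
      have hij : i ≠ j := fun h => hj (h ▸ hi)
      have he : (insert j T').erase i = insert j (T'.erase i) :=
        Finset.erase_insert_of_ne hij.symm
      have hXY : T'.erase i ⊆ insert j (T'.erase i) := Finset.subset_insert _ _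
      have hiY : i ∉ insert j (T'.erase i) := by
        simp [hij, Finset.notMem_erase]
      have h := hsub (T'.erase i) (insert j (T'.erase i)) i hXY hiY
      have hins1 : insert i (insert j (T'.erase i)) = insert j T' := by
        rw [Finset.insert_comm, Finset.insert_erase hi]
      have hins2 : insert i (T'.erase i) = T' := Finset.insert_erase hi
      rw [hins1, hins2] at h
      rw [he]
      exact h
    have hsum : ∑ i ∈ T', (C (insert j T') - C ((insert j T').erase i))
        ≤ ∑ i ∈ T', (C T' - C (T'.erase i)) := Finset.sum_le_sum step
    linarith

lemma reindex_pow {ι : Type*} [DecidableEq ι] (S : Finset ι) (f : Finset ι → ι → ℝ) :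
    ∑ T ∈ S.powerset, ∑ i ∈ T, f T i
      = ∑ U ∈ S.powerset, ∑ i ∈ S \ U, f (insert i U) i := by
  rw [Finset.sum_sigma', Finset.sum_sigma']
  refine Finset.sum_nbij' (fun p => ⟨p.1.erase p.2, p.2⟩)
    (fun p => ⟨insert p.2 p.1, p.2⟩) ?_ ?_ ?_ ?_ ?_
  · rintro ⟨T, i⟩ hp
    simp only [Finset.mem_sigma, Finset.mem_powerset] at hp ⊢
    obtain ⟨hT, hi⟩ := hp
    refine ⟨(Finset.erase_subset _ _).trans hT, ?_⟩
    simp [Finset.mem_sdiff, hT hi]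
  · rintro ⟨U, i⟩ hp
    simp only [Finset.mem_sigma, Finset.mem_powerset, Finset.mem_sdiff] at hp ⊢
    obtain ⟨hU, hi, _⟩ := hp
    exact ⟨Finset.insert_subset hi hU, Finset.mem_insert_self _ _⟩
  · rintro ⟨T, i⟩ hp
    simp only [Finset.mem_sigma, Finset.mem_powerset] at hp
    simp [Finset.insert_erase hp.2]
  · rintro ⟨U, i⟩ hp
    simp only [Finset.mem_sigma, Finset.mem_powerset, Finset.mem_sdiff] at hp
    simp [Finset.erase_insert hp.2.2]
  · rintro ⟨T, i⟩ hp
    simp only [Finset.mem_sigma, Finset.mem_powerset] at hp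
    simp [Finset.insert_erase hp.2]

lemma key_id {ι : Type*} [DecidableEq ι] (C : Finset ι → ℝ) (hC0 : C ∅ = 0) (S : Finset ι) :
    ∑ T ∈ S.powerset, wgt S.card T.card * (∑ i ∈ T, (C T - C (T.erase i))) = C S := by
  classical
  have expand : ∀ T ∈ S.powerset,
      wgt S.card T.card * (∑ i ∈ T, (C T - C (T.erase i)))
        = (T.card : ℝ) * wgt S.card T.card * C T
            - ∑ i ∈ T, wgt S.card T.card * C (T.erase i) := by
    intro T _
    rw [Finset.sum_sub_distrib, Finset.sum_const, nsmul_eq_mul, mul_sub, Finset.mul_sum]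
    ring
  rw [Finset.sum_congr rfl expand, Finset.sum_sub_distrib]
  have h2 : ∑ T ∈ S.powerset, ∑ i ∈ T, wgt S.card T.card * C (T.erase i)
      = ∑ U ∈ S.powerset, ((S.card - U.card : ℕ) : ℝ) * (wgt S.card (U.card + 1) * C U) := by
    rw [reindex_pow S (fun T i => wgt S.card T.card * C (T.erase i))]
    refine Finset.sum_congr rfl ?_
    intro U hU
    rw [Finset.mem_powerset] at hU
    have hval : ∀ i ∈ S \ U, wgt S.card (insert i U).card * C ((insert i U).erase i)
        = wgt S.card (U.card + 1) * C U := by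
      intro i hi
      rw [Finset.mem_sdiff] at hi
      rw [Finset.card_insert_of_notMem hi.2, Finset.erase_insert hi.2]
    rw [Finset.sum_congr rfl hval, Finset.sum_const, nsmul_eq_mul, Finset.card_sdiff_of_subset hU]
  rw [h2, ← Finset.sum_sub_distrib]
  have h3 : ∀ T ∈ S.powerset,
      ((T.card : ℝ) * wgt S.card T.card * C T
          - ((S.card - T.card : ℕ) : ℝ) * (wgt S.card (T.card + 1) * C T))
        = if T = S then C S else 0 := by
    intro T hT
    rw [Finset.mem_powerset] at hT
    by_cases hTS : T = S
    · subst hTS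
      rw [if_pos rfl, Nat.sub_self, Nat.cast_zero, zero_mul, sub_zero]
      rcases Nat.eq_zero_or_pos T.card with h0 | h0
      · rw [Finset.card_eq_zero] at h0; rw [h0]; simp [hC0]
      · rw [wgt_self h0, one_mul]
    · rw [if_neg hTS]
      have hlt : T.card < S.card := Finset.card_lt_card (hT.ssubset_of_ne hTS)
      rcases Nat.eq_zero_or_pos T.card with h0 | h0
      · rw [Finset.card_eq_zero] at h0; rw [h0]; simp [hC0]
      · rw [wgt_step h0 hlt, mul_assoc, sub_self]
  rw [Finset.sum_congr rfl h3, Finset.sum_ite_eq' S.powerset S (fun _ => C S)]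
  simp

lemma cost_le_shapley_pot {ι : Type*} [DecidableEq ι] (C : Finset ι → ℝ) (hC0 : C ∅ = 0)
    (hsub : ∀ (X Y : Finset ι) (i : ι), X ⊆ Y → i ∉ Y →
      C (insert i Y) - C Y ≤ C (insert i X) - C X) (S : Finset ι) :
    C S ≤ ∑ T ∈ S.powerset.filter (fun T => T.Nonempty), wgt S.card T.card * C T := by
  have h1 : C S ≤ ∑ T ∈ S.powerset, wgt S.card T.card * C T := by
    rw [← key_id C hC0 S]
    refine Finset.sum_le_sum ?_
    intro T _
    exact mul_le_mul_of_nonneg_left (marg_le C hC0 hsub T) (wgt_nonneg _ _)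
  have h2 : ∑ T ∈ S.powerset.filter (fun T => T.Nonempty), wgt S.card T.card * C T
      = ∑ T ∈ S.powerset, wgt S.card T.card * C T := by
    refine Finset.sum_filter_of_ne ?_
    intro T _ hne
    rcases T.eq_empty_or_nonempty with h | h
    · exfalso; apply hne; rw [h, hC0, mul_zero]
    · exact h
  rw [h2]; exact h1

/-- For submodular costs, the social cost is at most the Shapley potential. -/
theorem socCost_le_pot_of_submodular {n : ℕ} {R : Type*} [Fintype R] [DecidableEq R]
    (Strat : Fin n → Set (Finset R)) (Cr : R → Finset (Fin n) → ℝ)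
    (hC0 : ∀ r, Cr r ∅ = 0)
    (hnn : ∀ r T, 0 ≤ Cr r T)
    (hsub : ∀ r (X Y : Finset (Fin n)) (i : Fin n), X ⊆ Y → i ∉ Y →
      Cr r (insert i Y) - Cr r Y ≤ Cr r (insert i X) - Cr r X)
    (Q : Fin n → Finset R) (hQ : ∀ i, Q i ∈ Strat i) :
    socCost Cr Q ≤ pot Cr Q := by
  unfold socCost pot
  refine Finset.sum_le_sum ?_
  intro r _
  have h := cost_le_shapley_pot (Cr r) (hC0 r) (hsub r) (users Q r)
  refine h.trans_eq ?_
  refine Finset.sum_congr rfl ?_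
  intro T _
  rw [wgt]
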